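/- For the ECO-system with axiom (2) and rules (2) ↝ (2)(3), (k) ↝ (k-1)(k)^{k-2}(k+1) for k ≥ 3, viewed (after the shift k → k-2) as a walk on ℕ with rules (0) ↝ (0)(1), (k) ↝ (k-1)(k)^k(k+1), the generating function F(z,0) of excursions (walks returning to 0) satisfies F(z,0) = 1/(1 - z - z²B(z)) where B(z) = 1 + z + 2z² + 5z³ + 14z⁴ + 43z⁵ + ... is the generating function of Bessel numbers counting non-overlapping partitions; equivalently F(z,0) has the continued fraction expansion 1/(1 - z - z²/(1 - z - z²/(1 - 2z - z²/(1 - 3z - ...)))). -/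

import Mathlib

open PowerSeries Finset

noncomputable section Bessel19

def besselB (j : ℕ) : ℚ := ((max j 1 : ℕ) : ℚ)

def besselE : ℕ → ℕ → ℚ
  | 0, _ => 1
  | (n+1), j => besselB j * besselE n j +
      ∑ a ∈ Finset.range n, besselE (min a (n-1)) (j+1) * besselE (n-1-a) j
  termination_by n => n
  decreasing_by all_goals omega

lemma besselE_succ (n j : ℕ) : besselE (n+1) j = besselB j * besselE n j +
    ∑ a ∈ Finset.range n, besselE a (j+1) * besselE (n-1-a) j := by
  rw [besselE]
  congr 1
  apply Finset.sum_congr rfl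
  intro a ha
  rw [Finset.mem_range] at ha
  congr 2
  omega

def besselES (j : ℕ) : PowerSeries ℚ := mk (fun n => besselE n j)

lemma besselES_key (j : ℕ) :
    besselES j = 1 + C (besselB j) * X * besselES j
      + X ^ 2 * (besselES (j+1) * besselES j) := by
  ext n
  match n with
  | 0 =>
    simp [besselES, besselE, coeff_zero_eq_constantCoeff]
  | (m+1) =>
    simp only [besselES, coeff_mk]
    rw [besselE_succ]
    simp only [map_add, coeff_one, Nat.succ_ne_zero, if_false, mul_assoc,
      coeff_C_mul, coeff_succ_X_mul, coeff_X_pow_mul', coeff_mk]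
    match m with
    | 0 => norm_num
    | (k+1) =>
      rw [if_pos (by omega), show k + 1 + 1 - 2 = k from rfl, coeff_mul,
        Finset.Nat.sum_antidiagonal_eq_sum_range_succ_mk]
      simp only [zero_add, coeff_mk]
      norm_num

end Bessel19

noncomputable section Bessel19b
open Finset

def besselG (j : ℕ) : PowerSeries ℚ := X ^ j * ∏ i ∈ Finset.range (j+1), besselES i

lemma besselG_step (j : ℕ) : besselG j = (if j = 0 then 1 else 0) + X * besselG (j+1)
    + C (besselB j) * X * besselG j + (if 1 ≤ j then X * besselG (j-1) else 0) := by
  cases j with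
  | zero =>
    simp only [besselG, Finset.prod_range_succ, Finset.prod_range_one]
    norm_num
    linear_combination besselES_key 0
  | succ k =>
    simp only [besselG, if_neg (Nat.succ_ne_zero k), if_pos (Nat.one_le_iff_ne_zero.mpr
      (Nat.succ_ne_zero k)), Nat.succ_sub_one, zero_add,
      Finset.prod_range_succ (n := k+1), Finset.prod_range_succ (n := k+2)]
    linear_combination (X ^ (k+1) * ∏ i ∈ Finset.range (k+1), besselES i) * besselES_key (k+1)

end Bessel19b

section Bessel19c
open Finset

lemma coeff_besselG (f : ℕ → ℕ → ℕ)
    (h0 : ∀ k, f 0 k = if k = 0 then 1 else 0)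
    (hstep : ∀ n k, f (n + 1) k =
      f n (k + 1) + max k 1 * f n k + (if 1 ≤ k then f n (k - 1) else 0)) :
    ∀ n j, (coeff n) (besselG j) = (f n j : ℚ) := by
  intro n
  induction n with
  | zero =>
    intro j
    rw [h0]
    rcases j with _ | k
    · simp [besselG, coeff_zero_eq_constantCoeff, besselES, besselE]
    · simp [besselG, coeff_zero_eq_constantCoeff, map_mul, map_pow, constantCoeff_X]
  | succ n ih =>
    intro j
    rw [besselG_step j, hstep]
    rcases j with _ | k
    · simp only [if_pos rfl, if_neg (by omega : ¬ (1:ℕ) ≤ 0), add_zero, map_add,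
        coeff_one, Nat.succ_ne_zero, if_false, mul_assoc, coeff_C_mul, coeff_succ_X_mul,
        ih, besselB]
      push_cast
      norm_num
    · simp only [if_neg (Nat.succ_ne_zero k), if_pos (by omega : 1 ≤ k+1), Nat.succ_sub_one,
        zero_add, map_add, mul_assoc, coeff_C_mul, coeff_succ_X_mul, ih, besselB]
      rw [show max (k+1) 1 = k+1 from by omega]
      push_cast
      ring

end Bessel19c

section Bessel19v
lemma bE0 (j : ℕ) : besselE 0 j = 1 := by rw [besselE]
lemma bE_1_1 : besselE 1 1 = 1 := by
  rw [show (1:ℕ) = 0+1 from rfl, besselE_succ]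
  norm_num [Finset.sum_range_succ, besselB, bE0]
lemma bE_1_2 : besselE 1 2 = 2 := by
  rw [show (1:ℕ) = 0+1 from rfl, besselE_succ]
  norm_num [Finset.sum_range_succ, besselB, bE0]
lemma bE_1_3 : besselE 1 3 = 3 := by
  rw [show (1:ℕ) = 0+1 from rfl, besselE_succ]
  norm_num [Finset.sum_range_succ, besselB, bE0]
lemma bE_2_1 : besselE 2 1 = 2 := by
  rw [show (2:ℕ) = 1+1 from rfl, besselE_succ]
  norm_num [Finset.sum_range_succ, besselB, bE0, bE_1_1]
lemma bE_2_2 : besselE 2 2 = 5 := by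
  rw [show (2:ℕ) = 1+1 from rfl, besselE_succ]
  norm_num [Finset.sum_range_succ, besselB, bE0, bE_1_2]
lemma bE_2_3 : besselE 2 3 = 10 := by
  rw [show (2:ℕ) = 1+1 from rfl, besselE_succ]
  norm_num [Finset.sum_range_succ, besselB, bE0, bE_1_3]
lemma bE_3_1 : besselE 3 1 = 5 := by
  rw [show (3:ℕ) = 2+1 from rfl, besselE_succ]
  norm_num [Finset.sum_range_succ, besselB, bE0, bE_1_1, bE_1_2, bE_2_1]
lemma bE_3_2 : besselE 3 2 = 15 := by
  rw [show (3:ℕ) = 2+1 from rfl, besselE_succ]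
  norm_num [Finset.sum_range_succ, besselB, bE0, bE_1_2, bE_1_3, bE_2_2]
lemma bE_4_1 : besselE 4 1 = 14 := by
  rw [show (4:ℕ) = 3+1 from rfl, besselE_succ]
  norm_num [Finset.sum_range_succ, besselB, bE0, bE_1_1, bE_1_2, bE_2_1, bE_2_2, bE_3_1]
lemma bE_4_2 : besselE 4 2 = 51 := by
  rw [show (4:ℕ) = 3+1 from rfl, besselE_succ]
  norm_num [Finset.sum_range_succ, besselB, bE0, bE_1_2, bE_1_3, bE_2_2, bE_2_3, bE_3_2]
lemma bE_5_1 : besselE 5 1 = 43 := by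
  rw [show (5:ℕ) = 4+1 from rfl, besselE_succ]
  norm_num [Finset.sum_range_succ, besselB, bE0, bE_1_1, bE_1_2, bE_2_1, bE_2_2, bE_3_1, bE_3_2, bE_4_1]
lemma bE_6_1 : besselE 6 1 = 143 := by
  rw [show (6:ℕ) = 5+1 from rfl, besselE_succ]
  norm_num [Finset.sum_range_succ, besselB, bE0, bE_1_1, bE_1_2, bE_2_1, bE_2_2, bE_3_1, bE_3_2, bE_4_1, bE_4_2, bE_5_1]
end Bessel19v

theorem stmt_19 (f : ℕ → ℕ → ℕ)
    (h0 : ∀ k, f 0 k = if k = 0 then 1 else 0)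
    (hstep : ∀ n k, f (n + 1) k =
      f n (k + 1) + max k 1 * f n k + (if 1 ≤ k then f n (k - 1) else 0)) :
    ∃ E : ℕ → PowerSeries ℚ,
      (∀ j, E j * (1 - C ((max j 1 : ℕ) : ℚ) * X - X ^ 2 * E (j + 1)) = 1) ∧
      mk (fun n => (f n 0 : ℚ)) = E 0 ∧
      (E 0) * (1 - X - X ^ 2 * E 1) = 1 ∧
      coeff 0 (E 1) = 1 ∧ coeff 1 (E 1) = 1 ∧ coeff 2 (E 1) = 2 ∧
      coeff 3 (E 1) = 5 ∧ coeff 4 (E 1) = 14 ∧ coeff 5 (E 1) = 43 ∧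
      coeff 6 (E 1) = 143 := by
  have hCF : ∀ j, besselES j * (1 - C ((max j 1 : ℕ) : ℚ) * X - X ^ 2 * besselES (j + 1)) = 1 := by
    intro j
    have h := besselES_key j
    rw [show ((max j 1 : ℕ) : ℚ) = besselB j from rfl]
    linear_combination h
  refine ⟨besselES, hCF, ?_, ?_, ?_, ?_, ?_, ?_, ?_, ?_, ?_⟩
  · ext n
    rw [coeff_mk, ← coeff_besselG f h0 hstep n 0]
    simp [besselG]
  · simpa using hCF 0
  all_goals simp only [besselES, coeff_mk]
  · exact bE0 1
  · exact bE_1_1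
  · exact bE_2_1
  · exact bE_3_1
  · exact bE_4_1
  · exact bE_5_1
  · exact bE_6_1
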